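/- The function z ↦ z²·(1/2 − z·erfc(z)·e^{z²}) tends to 1/4 as z → ∞. -/

import Mathlib

open Real Filter Topology MeasureTheory intervalIntegral

/-- The unnormalized complementary error function `erfc z = ∫_z^∞ e^{-s²} ds`. -/
noncomputable def erfc (z : ℝ) : ℝ := ∫ s in Set.Ioi z, Real.exp (-s ^ 2)

lemma integrable_exp_neg_sq' : Integrable (fun s : ℝ => Real.exp (-s ^ 2)) := by
  simpa using integrable_exp_neg_mul_sq (one_pos)

lemma erfc_eq (z : ℝ) (hz : 0 ≤ z) :
    erfc z = (∫ s in Set.Ioi (0:ℝ), Real.exp (-s ^ 2)) - ∫ s in (0:ℝ)..z, Real.exp (-s ^ 2) := by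
  have hsplit : (∫ s in Set.Ioi (0:ℝ), Real.exp (-s ^ 2))
      = (∫ s in Set.Ioc (0:ℝ) z, Real.exp (-s ^ 2)) + ∫ s in Set.Ioi z, Real.exp (-s ^ 2) := by
    rw [← Set.Ioc_union_Ioi_eq_Ioi hz]
    exact setIntegral_union (Set.Ioc_disjoint_Ioi le_rfl) measurableSet_Ioi
      integrable_exp_neg_sq'.integrableOn integrable_exp_neg_sq'.integrableOn
  rw [intervalIntegral.integral_of_le hz]
  unfold erfc
  linarith [hsplit]

lemma hasDerivAt_erfc {z : ℝ} (hz : 0 < z) : HasDerivAt erfc (-Real.exp (-z ^ 2)) z := by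
  have h : HasDerivAt (fun u => (∫ s in Set.Ioi (0:ℝ), Real.exp (-s ^ 2))
      - ∫ s in (0:ℝ)..u, Real.exp (-s ^ 2)) (-Real.exp (-z ^ 2)) z := by
    exact ((integral_hasDerivAt_right (integrable_exp_neg_sq'.intervalIntegrable)
      (integrable_exp_neg_sq'.aestronglyMeasurable.stronglyMeasurableAtFilter)
      (Continuous.continuousAt (by fun_prop))).const_sub _)
  refine h.congr_of_eventuallyEq ?_
  filter_upwards [eventually_gt_nhds hz] with u hu using erfc_eq u hu.le

lemma tendsto_erfc : Tendsto erfc atTop (𝓝 0) := by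
  have h : Tendsto (fun z => ∫ s in (0:ℝ)..z, Real.exp (-s ^ 2)) atTop
      (𝓝 (∫ s in Set.Ioi (0:ℝ), Real.exp (-s ^ 2))) :=
    intervalIntegral_tendsto_integral_Ioi 0 integrable_exp_neg_sq'.integrableOn tendsto_id
  have h2 : Tendsto (fun z => (∫ s in Set.Ioi (0:ℝ), Real.exp (-s ^ 2))
      - ∫ s in (0:ℝ)..z, Real.exp (-s ^ 2)) atTop (𝓝 0) := by
    have h3 := h.const_sub (∫ s in Set.Ioi (0:ℝ), Real.exp (-s ^ 2))
    rwa [sub_self] at h3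
  refine h2.congr' ?_
  filter_upwards [eventually_ge_atTop (0:ℝ)] with z hz
  exact (erfc_eq z hz).symm


noncomputable def Fa (z : ℝ) : ℝ := Real.exp (-z ^ 2) * (1/2 * z⁻¹ - 1/4 * (z ^ 3)⁻¹)

noncomputable def Ga (z : ℝ) : ℝ :=
  Real.exp (-z ^ 2) * (1/2 * z⁻¹ - 1/4 * (z ^ 3)⁻¹ + 3/8 * (z ^ 5)⁻¹)

lemma hasDerivAt_exp_neg_sq (z : ℝ) :
    HasDerivAt (fun z : ℝ => Real.exp (-z ^ 2)) (Real.exp (-z ^ 2) * (-(2 * z))) z := by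
  have h1 : HasDerivAt (fun z : ℝ => -z ^ 2) (-(2 * z)) z := by
    simpa using (hasDerivAt_pow 2 z).fun_neg
  exact h1.exp

lemma hasDerivAt_Fa {z : ℝ} (hz : z ≠ 0) :
    HasDerivAt Fa (Real.exp (-z ^ 2) * (-1 + 3/4 * (z ^ 4)⁻¹)) z := by
  have hP : HasDerivAt (fun z : ℝ => 1/2 * z⁻¹ - 1/4 * (z ^ 3)⁻¹)
      (1/2 * (-(z ^ 2)⁻¹) - 1/4 * (-(3 * z ^ 2) / (z ^ 3) ^ 2)) z := by
    have i1 := (hasDerivAt_inv hz).const_mul (1/2 : ℝ)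
    have i3 : HasDerivAt (fun z : ℝ => (z ^ 3)⁻¹) (-(3 * z ^ 2) / (z ^ 3) ^ 2) z := by
      simpa using (hasDerivAt_pow 3 z).fun_inv (pow_ne_zero 3 hz)
    exact i1.sub (i3.const_mul (1/4))
  have h := (hasDerivAt_exp_neg_sq z).fun_mul hP
  refine h.congr_deriv ?_
  field_simp
  ring

lemma hasDerivAt_Ga {z : ℝ} (hz : z ≠ 0) :
    HasDerivAt Ga (Real.exp (-z ^ 2) * (-1 - 15/8 * (z ^ 6)⁻¹)) z := by
  have hP : HasDerivAt (fun z : ℝ => 1/2 * z⁻¹ - 1/4 * (z ^ 3)⁻¹ + 3/8 * (z ^ 5)⁻¹)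
      (1/2 * (-(z ^ 2)⁻¹) - 1/4 * (-(3 * z ^ 2) / (z ^ 3) ^ 2)
        + 3/8 * (-(5 * z ^ 4) / (z ^ 5) ^ 2)) z := by
    have i1 := (hasDerivAt_inv hz).const_mul (1/2 : ℝ)
    have i3 : HasDerivAt (fun z : ℝ => (z ^ 3)⁻¹) (-(3 * z ^ 2) / (z ^ 3) ^ 2) z := by
      simpa using (hasDerivAt_pow 3 z).fun_inv (pow_ne_zero 3 hz)
    have i5 : HasDerivAt (fun z : ℝ => (z ^ 5)⁻¹) (-(5 * z ^ 4) / (z ^ 5) ^ 2) z := by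
      simpa using (hasDerivAt_pow 5 z).fun_inv (pow_ne_zero 5 hz)
    exact (i1.sub (i3.const_mul (1/4))).add (i5.const_mul (3/8))
  have h := (hasDerivAt_exp_neg_sq z).fun_mul hP
  refine h.congr_deriv ?_
  field_simp
  ring

lemma tendsto_exp_neg_sq : Tendsto (fun z : ℝ => Real.exp (-z ^ 2)) atTop (𝓝 0) := by
  have := Real.tendsto_exp_neg_atTop_nhds_zero.comp (tendsto_pow_atTop (two_ne_zero))
  simpa [Function.comp] using this

lemma tendsto_inv_pow_atTop (n : ℕ) (hn : n ≠ 0) :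
    Tendsto (fun z : ℝ => (z ^ n)⁻¹) atTop (𝓝 0) :=
  tendsto_inv_atTop_zero.comp (tendsto_pow_atTop hn)

lemma tendsto_Fa : Tendsto Fa atTop (𝓝 0) := by
  have e1 : Tendsto (fun z : ℝ => z⁻¹) atTop (𝓝 0) := tendsto_inv_atTop_zero
  have e3 := tendsto_inv_pow_atTop 3 (by norm_num)
  have h2 : Tendsto (fun z : ℝ => 1/2 * z⁻¹ - 1/4 * (z ^ 3)⁻¹) atTop
      (𝓝 (1/2 * 0 - 1/4 * 0)) := (e1.const_mul (1/2)).sub (e3.const_mul (1/4))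
  have h := tendsto_exp_neg_sq.mul h2
  unfold Fa
  simpa using h

lemma tendsto_Ga : Tendsto Ga atTop (𝓝 0) := by
  have e1 : Tendsto (fun z : ℝ => z⁻¹) atTop (𝓝 0) := tendsto_inv_atTop_zero
  have e3 := tendsto_inv_pow_atTop 3 (by norm_num)
  have e5 := tendsto_inv_pow_atTop 5 (by norm_num)
  have h2 : Tendsto (fun z : ℝ => 1/2 * z⁻¹ - 1/4 * (z ^ 3)⁻¹ + 3/8 * (z ^ 5)⁻¹) atTop
      (𝓝 (1/2 * 0 - 1/4 * 0 + 3/8 * 0)) :=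
    ((e1.const_mul (1/2)).sub (e3.const_mul (1/4))).add (e5.const_mul (3/8))
  have h := tendsto_exp_neg_sq.mul h2
  unfold Ga
  simpa using h

lemma Fa_le_erfc {z : ℝ} (hz : 0 < z) : Fa z ≤ erfc z := by
  set D : ℝ → ℝ := fun x => -Real.exp (-x ^ 2) - Real.exp (-x ^ 2) * (-1 + 3/4 * (x ^ 4)⁻¹)
    with hD_def
  have hstep : ∀ w, z ≤ w → erfc w - Fa w ≤ erfc z - Fa z := by
    intro w hw
    have hpos : ∀ x ∈ Set.uIcc z w, 0 < x := by
      intro x hx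
      rw [Set.uIcc_of_le hw] at hx
      exact lt_of_lt_of_le hz hx.1
    have hD : ∀ x ∈ Set.uIcc z w, HasDerivAt (fun x => erfc x - Fa x) (D x) x := fun x hx =>
      (hasDerivAt_erfc (hpos x hx)).sub (hasDerivAt_Fa (hpos x hx).ne')
    have hcont : ContinuousOn D (Set.uIcc z w) := by
      refine ContinuousOn.sub (Continuous.continuousOn (by fun_prop)) ?_
      refine ContinuousOn.mul (Continuous.continuousOn (by fun_prop)) ?_
      refine continuousOn_const.add (ContinuousOn.mul continuousOn_const ?_)
      exact ContinuousOn.inv₀ (Continuous.continuousOn (by fun_prop))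
        (fun x hx => pow_ne_zero 4 (hpos x hx).ne')
    have heq := intervalIntegral.integral_eq_sub_of_hasDerivAt hD
      (hcont.intervalIntegrable)
    have hnn : (0:ℝ) ≤ ∫ x in z..w, -D x := by
      refine intervalIntegral.integral_nonneg hw ?_
      intro u hu
      have hu0 : 0 < u := lt_of_lt_of_le hz hu.1
      have : -D u = 3/4 * Real.exp (-u ^ 2) * (u ^ 4)⁻¹ := by
        simp only [hD_def]; ring
      rw [this]
      positivity
    rw [intervalIntegral.integral_neg] at hnn
    linarith
  have hlim : Tendsto (fun w => erfc w - Fa w) atTop (𝓝 0) := by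
    simpa using tendsto_erfc.sub tendsto_Fa
  have := le_of_tendsto hlim (eventually_atTop.mpr ⟨z, hstep⟩)
  linarith

lemma erfc_le_Ga {z : ℝ} (hz : 0 < z) : erfc z ≤ Ga z := by
  set D : ℝ → ℝ := fun x => -Real.exp (-x ^ 2) - Real.exp (-x ^ 2) * (-1 - 15/8 * (x ^ 6)⁻¹)
    with hD_def
  have hstep : ∀ w, z ≤ w → erfc z - Ga z ≤ erfc w - Ga w := by
    intro w hw
    have hpos : ∀ x ∈ Set.uIcc z w, 0 < x := by
      intro x hx
      rw [Set.uIcc_of_le hw] at hx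
      exact lt_of_lt_of_le hz hx.1
    have hD : ∀ x ∈ Set.uIcc z w, HasDerivAt (fun x => erfc x - Ga x) (D x) x := fun x hx =>
      (hasDerivAt_erfc (hpos x hx)).sub (hasDerivAt_Ga (hpos x hx).ne')
    have hcont : ContinuousOn D (Set.uIcc z w) := by
      refine ContinuousOn.sub (Continuous.continuousOn (by fun_prop)) ?_
      refine ContinuousOn.mul (Continuous.continuousOn (by fun_prop)) ?_
      refine continuousOn_const.sub (ContinuousOn.mul continuousOn_const ?_)
      exact ContinuousOn.inv₀ (Continuous.continuousOn (by fun_prop))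
        (fun x hx => pow_ne_zero 6 (hpos x hx).ne')
    have heq := intervalIntegral.integral_eq_sub_of_hasDerivAt hD
      (hcont.intervalIntegrable)
    have hnn : (0:ℝ) ≤ ∫ x in z..w, D x := by
      refine intervalIntegral.integral_nonneg hw ?_
      intro u hu
      have hu0 : 0 < u := lt_of_lt_of_le hz hu.1
      have : D u = 15/8 * Real.exp (-u ^ 2) * (u ^ 6)⁻¹ := by
        simp only [hD_def]; ring
      rw [this]
      positivity
    linarith
  have hlim : Tendsto (fun w => erfc w - Ga w) atTop (𝓝 0) := by
    simpa using tendsto_erfc.sub tendsto_Ga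
  have := ge_of_tendsto hlim (eventually_atTop.mpr ⟨z, hstep⟩)
  linarith

/-- The function `z ↦ z²·(1/2 − z·erfc z·e^{z²})` tends to `1/4` as `z → ∞`. -/
theorem tendsto_sq_mul_half_sub_erfc :
    Tendsto (fun z : ℝ => z ^ 2 * (1 / 2 - z * erfc z * Real.exp (z ^ 2)))
      atTop (𝓝 (1 / 4)) := by
  have hg : Tendsto (fun z : ℝ => 1/4 - 3/8 * (z ^ 2)⁻¹) atTop (𝓝 (1/4)) := by
    have h0 := (tendsto_inv_pow_atTop 2 (by norm_num)).const_mul (3/8 : ℝ)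
    have h1 := h0.const_sub (1/4 : ℝ)
    simpa using h1
  refine tendsto_of_tendsto_of_tendsto_of_le_of_le' hg
    (tendsto_const_nhds : Tendsto (fun _ : ℝ => (1:ℝ)/4) atTop _) ?_ ?_
  · filter_upwards [eventually_gt_atTop (0:ℝ)] with z hz
    have hE : (0:ℝ) < Real.exp (z ^ 2) := Real.exp_pos _
    have h1 := erfc_le_Ga hz
    have h2 : z ^ 3 * Real.exp (z ^ 2) * Ga z = z ^ 2 / 2 - 1/4 + 3/8 * (z ^ 2)⁻¹ := by
      unfold Ga
      rw [Real.exp_neg]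
      field_simp
    have key : z ^ 3 * Real.exp (z ^ 2) * erfc z ≤ z ^ 2 / 2 - 1/4 + 3/8 * (z ^ 2)⁻¹ := by
      calc z ^ 3 * Real.exp (z ^ 2) * erfc z
          ≤ z ^ 3 * Real.exp (z ^ 2) * Ga z :=
            mul_le_mul_of_nonneg_left h1 (by positivity)
        _ = _ := h2
    nlinarith [key]
  · filter_upwards [eventually_gt_atTop (0:ℝ)] with z hz
    have hE : (0:ℝ) < Real.exp (z ^ 2) := Real.exp_pos _
    have h1 := Fa_le_erfc hz
    have h2 : z ^ 3 * Real.exp (z ^ 2) * Fa z = z ^ 2 / 2 - 1/4 := by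
      unfold Fa
      rw [Real.exp_neg]
      field_simp
    have key : z ^ 2 / 2 - 1/4 ≤ z ^ 3 * Real.exp (z ^ 2) * erfc z := by
      calc z ^ 2 / 2 - 1/4 = z ^ 3 * Real.exp (z ^ 2) * Fa z := h2.symm
        _ ≤ z ^ 3 * Real.exp (z ^ 2) * erfc z :=
            mul_le_mul_of_nonneg_left h1 (by positivity)
    nlinarith [key]
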